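/- Let d ≥ 1, δ ≥ 0 and 1 < p⁻ ≤ p⁺ < ∞. There exists a constant c ≥ 1, depending only on d, p⁻, p⁺ and δ, such that for every exponent p ∈ [p⁻, p⁺] and all matrices A, B ∈ ℝ^{d×d}: c⁻¹ ((φ_p)*)_{|A^sym|}(|A^sym − B^sym|) ≤ |F*_p(A) − F*_p(B)|² ≤ c ((φ_p)*)_{|A^sym|}(|A^sym − B^sym|). -/

import Mathlib

open MeasureTheory

/-- The N-function `φ_p(r) = ∫₀^r (δ+s)^{p-2} s ds`. -/
noncomputable def phi (δ p r : ℝ) : ℝ :=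
  ∫ s in (0:ℝ)..r, (δ + s) ^ (p - 2) * s

/-- The Fenchel conjugate `ψ*(r) = sup_{s ≥ 0} (r·s − ψ(s))`. -/
noncomputable def fconj (ψ : ℝ → ℝ) (r : ℝ) : ℝ :=
  ⨆ s : NNReal, (r * (s : ℝ) - ψ (s : ℝ))

/-- The shifted conjugate `((φ_p)*)_a(r) := ∫₀^r ((φ_p)*)'(a+s) · s/(a+s) ds`. -/
noncomputable def conjShift (δ p a r : ℝ) : ℝ :=
  ∫ s in (0:ℝ)..r, deriv (fconj (phi δ p)) (a + s) * (s / (a + s))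

/-- The symmetric part `A^sym := ½(A + Aᵀ)`. -/
noncomputable def msym {d : ℕ} (A : Matrix (Fin d) (Fin d) ℝ) : Matrix (Fin d) (Fin d) ℝ :=
  (2 : ℝ)⁻¹ • (A + A.transpose)

/-- The Frobenius norm of a matrix. -/
noncomputable def frob {d : ℕ} (A : Matrix (Fin d) (Fin d) ℝ) : ℝ :=
  Real.sqrt (∑ i, ∑ j, (A i j) ^ 2)

/-- `F*_p(A) := (δ^{p−1}+|A^sym|)^{(p'−2)/2} A^sym` with `p' = p/(p−1)`. -/
noncomputable def Fstar {d : ℕ} (δ p : ℝ) (A : Matrix (Fin d) (Fin d) ℝ) :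
    Matrix (Fin d) (Fin d) ℝ :=
  ((δ ^ (p - 1) + frob (msym A)) ^ ((p / (p - 1) - 2) / 2)) • msym A


section AuxST7
open Set Filter

/-- Two-sided comparability with constant `c`. -/
def Cmp (c x y : ℝ) : Prop := c⁻¹ * x ≤ y ∧ y ≤ c * x

lemma Cmp.symm {c x y : ℝ} (hc : 1 ≤ c) (h : Cmp c x y) : Cmp c y x := by
  have hc0 : 0 < c := lt_of_lt_of_le one_pos hc
  obtain ⟨h1, h2⟩ := h
  constructor
  · rw [inv_mul_le_iff₀ hc0] at h1 ⊢ <;> linarith [h2]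
  · rw [inv_mul_le_iff₀ hc0] at h1; linarith [h1]

lemma Cmp.trans {c₁ c₂ x y z : ℝ} (hc₁ : 1 ≤ c₁) (hc₂ : 1 ≤ c₂)
    (h1 : Cmp c₁ x y) (h2 : Cmp c₂ y z) : Cmp (c₁ * c₂) x z := by
  have hc₁0 : 0 < c₁ := lt_of_lt_of_le one_pos hc₁
  have hc₂0 : 0 < c₂ := lt_of_lt_of_le one_pos hc₂
  obtain ⟨h11, h12⟩ := h1
  obtain ⟨h21, h22⟩ := h2
  constructor
  · have : (c₁ * c₂)⁻¹ * x = c₂⁻¹ * (c₁⁻¹ * x) := by rw [mul_inv, mul_assoc]; ring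
    rw [this]
    calc c₂⁻¹ * (c₁⁻¹ * x) ≤ c₂⁻¹ * y := by
          apply mul_le_mul_of_nonneg_left h11 (by positivity)
      _ ≤ z := h21
  · calc z ≤ c₂ * y := h22
      _ ≤ c₂ * (c₁ * x) := mul_le_mul_of_nonneg_left h12 (le_of_lt hc₂0)
      _ = c₁ * c₂ * x := by ring

lemma Cmp.zero {c : ℝ} : Cmp c 0 0 := by simp [Cmp]

/-- monotonicity of `t ↦ (κ+t)^σ t` for `σ > -1`. -/
lemma shift_rpow_mul_mono {κ σ : ℝ} (hκ : 0 ≤ κ) (hσ : -1 < σ) {s t : ℝ}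
    (hs : 0 ≤ s) (hst : s ≤ t) : (κ + s) ^ σ * s ≤ (κ + t) ^ σ * t := by
  rcases hs.eq_or_lt with rfl | hs0
  · simp only [mul_zero]; positivity
  have ht0 : 0 < t := lt_of_lt_of_le hs0 hst
  rcases le_or_gt 0 σ with hσ0 | hσ0
  · apply mul_le_mul _ hst hs0.le (by positivity)
    exact Real.rpow_le_rpow (by linarith) (by linarith) hσ0
  · -- σ < 0 case
    have hkey : s / t * (κ + t) ≤ κ + s := by
      rw [div_mul_eq_mul_div, div_le_iff₀ ht0]
      nlinarith
    have h1 : (κ + s) ^ σ ≤ (s / t * (κ + t)) ^ σ :=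
      Real.rpow_le_rpow_of_nonpos (by positivity) hkey hσ0.le
    have h2 : (s / t * (κ + t)) ^ σ = (s / t) ^ σ * (κ + t) ^ σ :=
      Real.mul_rpow (by positivity) (by positivity)
    calc (κ + s) ^ σ * s ≤ (s / t) ^ σ * (κ + t) ^ σ * s := by
          apply mul_le_mul_of_nonneg_right _ hs0.le
          rw [← h2]; exact h1
      _ = (κ + t) ^ σ * t * (s / t) ^ (σ + 1) := by
          rw [Real.rpow_add_one (by positivity : (s / t : ℝ) ≠ 0)]
          field_simp
      _ ≤ (κ + t) ^ σ * t * 1 := by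
          apply mul_le_mul_of_nonneg_left _ (by positivity)
          exact Real.rpow_le_one (by positivity) (by rw [div_le_one ht0]; exact hst) (by linarith)
      _ = (κ + t) ^ σ * t := mul_one _

/-- ratio bound for rpow. -/
lemma rpow_ratio_le {x y τ T K : ℝ} (hx : 0 < x) (hy : 0 < y) (h1 : y ≤ K * x)
    (h2 : x ≤ K * y) (hK : 1 ≤ K) (hτ : |τ| ≤ T) : y ^ τ ≤ K ^ T * x ^ τ := by
  have hK0 : 0 < K := lt_of_lt_of_le one_pos hK
  rcases le_or_gt 0 τ with hτ0 | hτ0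
  · calc y ^ τ ≤ (K * x) ^ τ := Real.rpow_le_rpow hy.le h1 hτ0
      _ = K ^ τ * x ^ τ := Real.mul_rpow hK0.le hx.le
      _ ≤ K ^ T * x ^ τ := by
          apply mul_le_mul_of_nonneg_right _ (by positivity)
          exact Real.rpow_le_rpow_of_exponent_le hK (le_trans (le_abs_self τ) hτ)
  · have hxK : x / K ≤ y := by rw [div_le_iff₀ hK0]; linarith [h2]
    calc y ^ τ ≤ (x / K) ^ τ := Real.rpow_le_rpow_of_nonpos (by positivity) hxK hτ0.le
      _ = x ^ τ * (K ^ τ)⁻¹ := by rw [Real.div_rpow hx.le hK0.le, div_eq_mul_inv]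
      _ = K ^ (-τ) * x ^ τ := by rw [← Real.rpow_neg hK0.le]; ring
      _ ≤ K ^ T * x ^ τ := by
          apply mul_le_mul_of_nonneg_right _ (by positivity)
          exact Real.rpow_le_rpow_of_exponent_le hK (le_trans (neg_le_abs τ) hτ)

lemma affine_le {α β l u w : ℝ} (hl : α + β * l ≤ 0) (hu : α + β * u ≤ 0)
    (hwl : l ≤ w) (hwu : w ≤ u) : α + β * w ≤ 0 := by
  rcases le_or_gt 0 β with hβ | hβ
  · nlinarith
  · nlinarith

/-- derivative of `t ↦ (κ+t)^σ t` at points with `κ + x > 0`. -/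
lemma hasDerivAt_shift_rpow_mul {κ σ x : ℝ} (hx : 0 < κ + x) :
    HasDerivAt (fun t => (κ + t) ^ σ * t) ((κ + x) ^ (σ - 1) * (κ + (1 + σ) * x)) x := by
  have h1 : HasDerivAt (fun t : ℝ => κ + t) 1 x := (hasDerivAt_id x).const_add κ
  have h2 : HasDerivAt (fun y : ℝ => y ^ σ) (σ * (κ + x) ^ (σ - 1)) (κ + x) :=
    Real.hasDerivAt_rpow_const (Or.inl hx.ne')
  have h3 : HasDerivAt (fun t : ℝ => (κ + t) ^ σ) (σ * (κ + x) ^ (σ - 1) * 1) x :=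
    h2.comp x h1
  have h4 : HasDerivAt (fun t => (κ + t) ^ σ * t) (σ * (κ + x) ^ (σ - 1) * 1 * x + (κ + x) ^ σ * 1) x := h3.mul (hasDerivAt_id x)
  convert h4 using 1
  have : (κ + x) ^ σ = (κ + x) ^ (σ - 1) * (κ + x) := by
    rw [← Real.rpow_add_one hx.ne']; ring_nf
  rw [this]; simp [id]; ring

-- ### Section 2: scalar hammer lemma

lemma two_rpow_ge_one {S : ℝ} (hS : 0 ≤ S) : (1:ℝ) ≤ 2 ^ S :=
  Real.one_le_rpow one_le_two hS

lemma two_rpow_pos (S : ℝ) : (0:ℝ) < 2 ^ S := Real.rpow_pos_of_pos two_pos S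

set_option maxHeartbeats 1000000 in
lemma scalar_hammer {κ σ S a b : ℝ} (hκ : 0 ≤ κ) (hσ : -(2⁻¹ : ℝ) < σ) (hσS : |σ| ≤ S)
    (hS : 1 ≤ S) (hb : 0 ≤ b) (hba : b ≤ a) :
    Cmp (2 ^ (S + 2) * (1 + S)) ((κ + a) ^ σ * (a - b))
      ((κ + a) ^ σ * a - (κ + b) ^ σ * b) := by
  have hS0 : 0 ≤ S := le_trans zero_le_one hS
  have h2S : (1:ℝ) ≤ 2 ^ S := two_rpow_ge_one hS0
  have h2S2 : (1:ℝ) ≤ 2 ^ (S + 2) := two_rpow_ge_one (by linarith)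
  have hc1 : (1:ℝ) ≤ 2 ^ (S + 2) * (1 + S) := by nlinarith
  have hc0 : (0:ℝ) < 2 ^ (S + 2) * (1 + S) := lt_of_lt_of_le one_pos hc1
  have hSsplit : (2:ℝ) ^ (S + 2) = 2 ^ S * 4 := by
    rw [Real.rpow_add two_pos]
    congr 1
    rw [show (2:ℝ) = ((2:ℕ):ℝ) from by norm_num, Real.rpow_natCast]
    norm_num
  rcases hba.eq_or_lt with rfl | hab
  · simp [Cmp]
  have ha0 : 0 < a := lt_of_le_of_lt hb hab
  have hκa : 0 < κ + a := by linarith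
  set L : ℝ := (κ + a) ^ σ with hL
  have hL0 : 0 < L := Real.rpow_pos_of_pos hκa σ
  have hmono : (κ + b) ^ σ * b ≤ (κ + a) ^ σ * a :=
    shift_rpow_mul_mono hκ (by linarith) hb hba
  rcases le_or_gt a (2 * b) with hcase | hcase
  · -- Case 1 : a ≤ 2b, use MVT
    have hb0 : 0 < b := by linarith
    have hκb : 0 < κ + b := by linarith
    -- MVT
    have hcont : ContinuousOn (fun t => (κ + t) ^ σ * t) (Icc b a) := by
      apply ContinuousOn.mul _ continuousOn_id
      apply ContinuousOn.rpow_const ((continuous_const.add continuous_id).continuousOn)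
      intro x hx
      show κ + x ≠ 0 ∨ 0 ≤ σ
      exact Or.inl (ne_of_gt (by nlinarith [hx.1]))
    have hderiv : ∀ x ∈ Ioo b a, HasDerivAt (fun t => (κ + t) ^ σ * t)
        ((κ + x) ^ (σ - 1) * (κ + (1 + σ) * x)) x := fun x hx =>
      hasDerivAt_shift_rpow_mul (by nlinarith [hx.1])
    obtain ⟨ξ, hξ, hslope⟩ := exists_hasDerivAt_eq_slope (fun t => (κ + t) ^ σ * t)
      (fun x => (κ + x) ^ (σ - 1) * (κ + (1 + σ) * x)) hab hcont hderiv
    have hξb : b < ξ := hξ.1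
    have hξa : ξ < a := hξ.2
    have hκξ : 0 < κ + ξ := by linarith
    have hY : (κ + a) ^ σ * a - (κ + b) ^ σ * b
        = (κ + ξ) ^ (σ - 1) * (κ + (1 + σ) * ξ) * (a - b) := by
      rw [hslope, div_mul_cancel₀ _ (sub_ne_zero.mpr (ne_of_gt hab))]
    -- rewrite derivative: (κ+ξ)^(σ-1)*(κ+ξ) = (κ+ξ)^σ
    have hpow : (κ + ξ) ^ (σ - 1) * (κ + ξ) = (κ + ξ) ^ σ := by
      rw [← Real.rpow_add_one hκξ.ne']; ring_nf
    have hξpow0 : 0 < (κ + ξ) ^ (σ - 1) := Real.rpow_pos_of_pos hκξ _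
    have hξσ0 : 0 < (κ + ξ) ^ σ := Real.rpow_pos_of_pos hκξ _
    -- two-sided bound on the derivative value
    have hup : (κ + ξ) ^ (σ - 1) * (κ + (1 + σ) * ξ) ≤ (1 + S) * (κ + ξ) ^ σ := by
      have h1 : κ + (1 + σ) * ξ ≤ (1 + S) * (κ + ξ) := by
        have : σ ≤ S := le_trans (le_abs_self σ) hσS
        nlinarith
      calc (κ + ξ) ^ (σ - 1) * (κ + (1 + σ) * ξ)
          ≤ (κ + ξ) ^ (σ - 1) * ((1 + S) * (κ + ξ)) :=
            mul_le_mul_of_nonneg_left h1 hξpow0.le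
        _ = (1 + S) * ((κ + ξ) ^ (σ - 1) * (κ + ξ)) := by ring
        _ = (1 + S) * (κ + ξ) ^ σ := by rw [hpow]
    have hlo : 2⁻¹ * (κ + ξ) ^ σ ≤ (κ + ξ) ^ (σ - 1) * (κ + (1 + σ) * ξ) := by
      have h1 : 2⁻¹ * (κ + ξ) ≤ κ + (1 + σ) * ξ := by nlinarith
      calc 2⁻¹ * (κ + ξ) ^ σ = (κ + ξ) ^ (σ - 1) * (2⁻¹ * (κ + ξ)) := by
            rw [← hpow]; ring
        _ ≤ (κ + ξ) ^ (σ - 1) * (κ + (1 + σ) * ξ) :=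
            mul_le_mul_of_nonneg_left h1 hξpow0.le
    -- comparison of (κ+ξ)^σ with L = (κ+a)^σ
    have hr1 : (κ + ξ) ^ σ ≤ 2 ^ S * L := by
      apply rpow_ratio_le hκa hκξ _ _ one_le_two hσS
      · linarith
      · linarith
    have hr2 : L ≤ 2 ^ S * (κ + ξ) ^ σ := by
      apply rpow_ratio_le hκξ hκa _ _ one_le_two hσS
      · linarith
      · linarith
    have hD0 : 0 < (κ + ξ) ^ (σ - 1) * (κ + (1 + σ) * ξ) :=
      lt_of_lt_of_le (by positivity) hlo
    have hab0 : (0:ℝ) ≤ a - b := by linarith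
    constructor
    · -- lower bound
      rw [hY, inv_mul_le_iff₀ hc0]
      have hkey : L ≤ (2 ^ (S + 2) * (1 + S)) * ((κ + ξ) ^ (σ - 1) * (κ + (1 + σ) * ξ)) := by
        calc L ≤ 2 ^ S * (κ + ξ) ^ σ := hr2
          _ ≤ 2 ^ S * (2 * ((κ + ξ) ^ (σ - 1) * (κ + (1 + σ) * ξ))) := by
              apply mul_le_mul_of_nonneg_left _ (two_rpow_pos S).le
              linarith [hlo]
          _ = (2 ^ S * 2) * ((κ + ξ) ^ (σ - 1) * (κ + (1 + σ) * ξ)) := by ring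
          _ ≤ (2 ^ (S + 2) * (1 + S)) * ((κ + ξ) ^ (σ - 1) * (κ + (1 + σ) * ξ)) := by
              apply mul_le_mul_of_nonneg_right _ hD0.le
              rw [hSsplit]; nlinarith [two_rpow_pos S]
      calc L * (a - b) ≤ ((2 ^ (S + 2) * (1 + S)) * ((κ + ξ) ^ (σ - 1) * (κ + (1 + σ) * ξ))) * (a - b) :=
            mul_le_mul_of_nonneg_right hkey hab0
        _ = 2 ^ (S + 2) * (1 + S) * ((κ + ξ) ^ (σ - 1) * (κ + (1 + σ) * ξ) * (a - b)) := by ring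
    · -- upper bound
      rw [hY]
      have hkey : (κ + ξ) ^ (σ - 1) * (κ + (1 + σ) * ξ) ≤ (2 ^ (S + 2) * (1 + S)) * L := by
        calc (κ + ξ) ^ (σ - 1) * (κ + (1 + σ) * ξ) ≤ (1 + S) * (κ + ξ) ^ σ := hup
          _ ≤ (1 + S) * (2 ^ S * L) := mul_le_mul_of_nonneg_left hr1 (by linarith)
          _ = ((1 + S) * 2 ^ S) * L := by ring
          _ ≤ (2 ^ (S + 2) * (1 + S)) * L := by
              apply mul_le_mul_of_nonneg_right _ hL0.le
              rw [hSsplit]; nlinarith [two_rpow_pos S]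
      calc (κ + ξ) ^ (σ - 1) * (κ + (1 + σ) * ξ) * (a - b)
          ≤ ((2 ^ (S + 2) * (1 + S)) * L) * (a - b) := mul_le_mul_of_nonneg_right hkey hab0
        _ = 2 ^ (S + 2) * (1 + S) * (L * (a - b)) := by ring
  · -- Case 2 : 2b < a
    have hab2 : a ≤ 2 * (a - b) := by linarith
    have hab0 : 0 < a - b := by linarith
    constructor
    · -- lower bound
      rw [inv_mul_le_iff₀ hc0]
      -- h b ≤ h (a/2) ≤ 2^(-1/2) h a
      have hmono2 : (κ + b) ^ σ * b ≤ (κ + a / 2) ^ σ * (a / 2) :=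
        shift_rpow_mul_mono hκ (by linarith) hb (by linarith)
      have hhalf : (κ + a / 2) ^ σ * (a / 2) ≤ (3/4 : ℝ) * ((κ + a) ^ σ * a) := by
        have hκa2 : 0 < κ + a / 2 := by linarith
        rcases le_or_gt 0 σ with hσ0 | hσ0
        · have : (κ + a / 2) ^ σ ≤ (κ + a) ^ σ :=
            Real.rpow_le_rpow hκa2.le (by linarith) hσ0
          nlinarith [Real.rpow_pos_of_pos hκa2 σ]
        · -- σ < 0 : (κ+a/2)^σ ≤ ((κ+a)/2)^σ = 2^(-σ) (κ+a)^σ ≤ 2^(1/2) (κ+a)^σ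
          have h1 : (κ + a / 2) ^ σ ≤ ((κ + a) / 2) ^ σ :=
            Real.rpow_le_rpow_of_nonpos (by linarith) (by linarith) hσ0.le
          have h2 : ((κ + a) / 2) ^ σ = (κ + a) ^ σ * ((2:ℝ) ^ σ)⁻¹ := by
            rw [Real.div_rpow hκa.le two_pos.le, div_eq_mul_inv]
          have h3 : ((2:ℝ) ^ σ)⁻¹ = (2:ℝ) ^ (-σ) := by
            rw [Real.rpow_neg two_pos.le]
          have h4 : (2:ℝ) ^ (-σ) ≤ (2:ℝ) ^ (2⁻¹:ℝ) :=
            Real.rpow_le_rpow_of_exponent_le one_le_two (by linarith)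
          have h5 : (2:ℝ) ^ (2⁻¹:ℝ) ≤ 3/2 := by
            have hx0 : (0:ℝ) < 2 ^ (2⁻¹:ℝ) := two_rpow_pos _
            have hx2 : ((2:ℝ) ^ (2⁻¹:ℝ)) * ((2:ℝ) ^ (2⁻¹:ℝ)) = 2 := by
              rw [← Real.rpow_add two_pos]; norm_num
            nlinarith
          have hL2 : 0 < (κ + a) ^ σ := Real.rpow_pos_of_pos hκa σ
          have : (κ + a / 2) ^ σ ≤ (3/2 : ℝ) * (κ + a) ^ σ := by
            rw [h2, h3] at h1
            calc (κ + a / 2) ^ σ ≤ (κ + a) ^ σ * (2:ℝ) ^ (-σ) := h1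
              _ ≤ (κ + a) ^ σ * (3/2) := by nlinarith
              _ = (3/2 : ℝ) * (κ + a) ^ σ := by ring
          nlinarith
      have hYlo : (1/4 : ℝ) * (L * a) ≤ (κ + a) ^ σ * a - (κ + b) ^ σ * b := by
        nlinarith [le_trans hmono2 hhalf]
      have hY0 : (0:ℝ) ≤ (κ + a) ^ σ * a - (κ + b) ^ σ * b := by nlinarith [mul_pos hL0 ha0]
      have hc4 : (4:ℝ) ≤ 2 ^ (S + 2) * (1 + S) := by
        rw [hSsplit]; nlinarith [two_rpow_pos S]
      have h7 : L * (a - b) ≤ 4 * ((κ + a) ^ σ * a - (κ + b) ^ σ * b) := by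
        nlinarith [mul_nonneg hL0.le hb]
      calc L * (a - b) ≤ 4 * ((κ + a) ^ σ * a - (κ + b) ^ σ * b) := h7
        _ ≤ (2 ^ (S + 2) * (1 + S)) * ((κ + a) ^ σ * a - (κ + b) ^ σ * b) :=
            mul_le_mul_of_nonneg_right hc4 hY0
    · -- upper bound : Y ≤ h a = L a ≤ 2 L (a-b) ≤ c L (a-b)
      have h1 : (κ + a) ^ σ * a - (κ + b) ^ σ * b ≤ L * a := by
        have hb' : 0 ≤ (κ + b) ^ σ * b := by positivity
        simp only [← hL]; nlinarith
      have h2 : L * a ≤ 2 * (L * (a - b)) := by nlinarith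
      have hc2 : (2:ℝ) ≤ 2 ^ (S + 2) * (1 + S) := by nlinarith
      calc (κ + a) ^ σ * a - (κ + b) ^ σ * b ≤ L * a := h1
        _ ≤ 2 * (L * (a - b)) := h2
        _ ≤ (2 ^ (S + 2) * (1 + S)) * (L * (a - b)) :=
            mul_le_mul_of_nonneg_right hc2 (mul_nonneg hL0.le (by linarith))

-- ### Section 3: vector hammer

lemma Cmp.mono {c c' x y : ℝ} (hc : 0 < c) (hcc : c ≤ c') (hx : 0 ≤ x)
    (h : Cmp c x y) : Cmp c' x y := by
  obtain ⟨h1, h2⟩ := h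
  have hc' : 0 < c' := lt_of_lt_of_le hc hcc
  constructor
  · refine le_trans ?_ h1
    apply mul_le_mul_of_nonneg_right _ hx
    exact inv_anti₀ hc hcc
  · exact le_trans h2 (mul_le_mul_of_nonneg_right hcc hx)

lemma Cmp.sq {c x y : ℝ} (hc : 1 ≤ c) (hx : 0 ≤ x) (hy : 0 ≤ y) (h : Cmp c x y) :
    Cmp (c ^ 2) (x ^ 2) (y ^ 2) := by
  have hc0 : 0 < c := lt_of_lt_of_le one_pos hc
  obtain ⟨h1, h2⟩ := h
  constructor
  · have := pow_le_pow_left₀ (by positivity) h1 2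
    calc (c ^ 2)⁻¹ * x ^ 2 = (c⁻¹ * x) ^ 2 := by rw [mul_pow]; ring_nf
      _ ≤ y ^ 2 := this
  · have := pow_le_pow_left₀ hy h2 2
    calc y ^ 2 ≤ (c * x) ^ 2 := this
      _ = c ^ 2 * x ^ 2 := by rw [mul_pow]

lemma rpow_sq {x σ : ℝ} (hx : 0 ≤ x) : (x ^ σ) ^ (2:ℕ) = x ^ (2 * σ) := by
  rw [← Real.rpow_natCast (x ^ σ) 2, ← Real.rpow_mul hx]
  norm_num
  rw [mul_comm]

set_option maxHeartbeats 1000000 in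
open RealInnerProductSpace in
lemma vector_hammer_aux {E : Type*} [NormedAddCommGroup E] [InnerProductSpace ℝ E]
    {κ σ S : ℝ} (hκ : 0 ≤ κ) (hσ : -(2⁻¹ : ℝ) < σ) (hσS : |σ| ≤ S) (hS : 1 ≤ S)
    (x y : E) (hba : ‖y‖ ≤ ‖x‖) :
    Cmp ((2 ^ (S + 2) * (1 + S)) ^ 2)
      ((κ + ‖x‖) ^ (2 * σ) * ‖x - y‖ ^ 2)
      (‖(κ + ‖x‖) ^ σ • x - (κ + ‖y‖) ^ σ • y‖ ^ 2) := by
  have hS0 : (0:ℝ) ≤ S := le_trans zero_le_one hS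
  have hc1 : (1:ℝ) ≤ 2 ^ (S + 2) * (1 + S) := by
    nlinarith [two_rpow_ge_one (show (0:ℝ) ≤ S + 2 by linarith)]
  set c₁ : ℝ := 2 ^ (S + 2) * (1 + S) with hc₁def
  have hc₁0 : 0 < c₁ := lt_of_lt_of_le one_pos hc1
  set a := ‖x‖ with hadef
  set b := ‖y‖ with hbdef
  have ha0 : 0 ≤ a := norm_nonneg x
  have hb0 : 0 ≤ b := norm_nonneg y
  rcases (show 0 ≤ κ + a by positivity).eq_or_lt with heq | hκa
  · -- κ + ‖x‖ = 0 : everything vanishes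
    have hκ0 : κ = 0 := by linarith
    have hx0 : x = 0 := norm_eq_zero.mp (by linarith)
    have hy0 : y = 0 := norm_eq_zero.mp (by linarith [hba])
    subst hx0; subst hy0
    simp [Cmp]
  -- main case
  set ρa := (κ + a) ^ σ with hρa
  set ρb := (κ + b) ^ σ with hρb
  have hρa0 : 0 ≤ ρa := Real.rpow_nonneg (by positivity) σ
  have hρb0 : 0 ≤ ρb := Real.rpow_nonneg (by positivity) σ
  set w := ⟪x, y⟫ with hw
  have hw1 : w ≤ a * b := le_trans (le_abs_self _) (abs_real_inner_le_norm x y)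
  have hw2 : -(a * b) ≤ w := by
    have := neg_abs_le (⟪x, y⟫ : ℝ)
    have h2 := abs_real_inner_le_norm x y
    simp only [← hw] at *
    linarith
  have hN : ‖ρa • x - ρb • y‖ ^ 2 = ρa ^ 2 * a ^ 2 + ρb ^ 2 * b ^ 2 - 2 * (ρa * ρb) * w := by
    rw [norm_sub_sq_real]
    rw [norm_smul, norm_smul, real_inner_smul_left, real_inner_smul_right]
    simp only [Real.norm_eq_abs, abs_of_nonneg hρa0, abs_of_nonneg hρb0]
    ring
  have hD : ‖x - y‖ ^ 2 = a ^ 2 + b ^ 2 - 2 * w := by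
    rw [norm_sub_sq_real]; ring
  set T := (κ + a) ^ (2 * σ) with hT
  have hT0 : 0 < T := Real.rpow_pos_of_pos hκa _
  have hTsq : ρa ^ 2 = T := by rw [hρa, hT, ← rpow_sq (le_of_lt hκa)]
  -- endpoint estimates
  have SH := scalar_hammer hκ hσ hσS hS hb0 hba
  have hsub0 : 0 ≤ ρa * a - ρb * b := by
    have h := shift_rpow_mul_mono (κ := κ) (σ := σ) hκ (by linarith) hb0 hba
    rw [hρa, hρb]
    linarith
  have P1 : Cmp (c₁ ^ 2) (T * (a - b) ^ 2) ((ρa * a - ρb * b) ^ 2) := by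
    have h := SH.sq hc1 (mul_nonneg (Real.rpow_nonneg hκa.le σ) (by linarith)) hsub0
    have he : ((κ + a) ^ σ * (a - b)) ^ 2 = T * (a - b) ^ 2 := by
      rw [mul_pow, ← hρa, hTsq]
    rw [he] at h
    exact h
  have E2 : Cmp 2 ((κ + a) ^ σ * (a + b)) (ρa * a + ρb * b) := by
    have hmono := hsub0
    constructor
    · rw [inv_mul_le_iff₀ two_pos]
      have h1 : (κ + a) ^ σ * (a + b) ≤ ρa * (2 * a) := by
        rw [hρa]
        apply mul_le_mul_of_nonneg_left (by linarith) (Real.rpow_nonneg hκa.le σ)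
      linarith [h1, mul_nonneg hρb0 hb0]
    · have h1 : ρa * a + ρb * b ≤ 2 * (ρa * a) := by linarith
      have h2 : ρa * a ≤ ρa * (a + b) := mul_le_mul_of_nonneg_left (by linarith) hρa0
      rw [← hρa]
      linarith
  have P2 : Cmp (c₁ ^ 2) (T * (a + b) ^ 2) ((ρa * a + ρb * b) ^ 2) := by
    have h4 : (2:ℝ) ≤ c₁ := by
      rw [hc₁def]
      nlinarith [two_rpow_ge_one (show (0:ℝ) ≤ S + 2 by linarith)]
    have h := (E2.mono two_pos h4
        (mul_nonneg (Real.rpow_nonneg hκa.le σ) (by linarith))).sq hc1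
        (mul_nonneg (Real.rpow_nonneg hκa.le σ) (by linarith))
        (by positivity)
    have he : ((κ + a) ^ σ * (a + b)) ^ 2 = T * (a + b) ^ 2 := by
      rw [mul_pow, ← hρa, hTsq]
    rw [he] at h
    exact h
  -- interpolation in w
  have hc₁sq : (0:ℝ) < c₁ ^ 2 := by positivity
  have P1u : (ρa * a - ρb * b) ^ 2 ≤ c₁ ^ 2 * (T * (a - b) ^ 2) := P1.2
  have P1l : T * (a - b) ^ 2 ≤ c₁ ^ 2 * (ρa * a - ρb * b) ^ 2 := by
    rw [← inv_mul_le_iff₀ hc₁sq]; exact P1.1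
  have P2u : (ρa * a + ρb * b) ^ 2 ≤ c₁ ^ 2 * (T * (a + b) ^ 2) := P2.2
  have P2l : T * (a + b) ^ 2 ≤ c₁ ^ 2 * (ρa * a + ρb * b) ^ 2 := by
    rw [← inv_mul_le_iff₀ hc₁sq]; exact P2.1
  constructor
  · -- lower bound : c⁻¹ (T ‖x-y‖²) ≤ N
    rw [inv_mul_le_iff₀ hc₁sq, hN, hD]
    have key : (T * (a ^ 2 + b ^ 2) - c₁ ^ 2 * (ρa ^ 2 * a ^ 2 + ρb ^ 2 * b ^ 2))
        + (-2 * T + 2 * c₁ ^ 2 * (ρa * ρb)) * w ≤ 0 := by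
      apply affine_le _ _ hw2 hw1
      · linarith [P2l, sq_nonneg (a + b), sq_nonneg (ρa * a + ρb * b)]
      · linarith [P1l, sq_nonneg (a - b), sq_nonneg (ρa * a - ρb * b)]
    linarith [key]
  · -- upper bound : N ≤ c (T ‖x-y‖²)
    rw [hN, hD]
    have key : (ρa ^ 2 * a ^ 2 + ρb ^ 2 * b ^ 2 - c₁ ^ 2 * (T * (a ^ 2 + b ^ 2)))
        + (2 * c₁ ^ 2 * T - 2 * (ρa * ρb)) * w ≤ 0 := by
      apply affine_le _ _ hw2 hw1
      · linarith [P2u, sq_nonneg (a + b), sq_nonneg (ρa * a + ρb * b)]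
      · linarith [P1u, sq_nonneg (a - b), sq_nonneg (ρa * a - ρb * b)]
    linarith [key]

-- ### Section 3b: symmetrized vector hammer with shifted base

lemma abs_two_mul_le {σ S : ℝ} (h : |σ| ≤ S) : |2 * σ| ≤ 2 * S := by
  rw [abs_mul]
  have : |(2:ℝ)| = 2 := by norm_num
  rw [this]
  linarith [abs_nonneg σ]

set_option maxHeartbeats 1000000 in
open RealInnerProductSpace in
lemma vector_hammer {E : Type*} [NormedAddCommGroup E] [InnerProductSpace ℝ E]
    {κ σ S : ℝ} (hκ : 0 ≤ κ) (hσ : -(2⁻¹ : ℝ) < σ) (hσS : |σ| ≤ S) (hS : 1 ≤ S)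
    (x y : E) :
    Cmp (3 ^ (2 * S) * (2 ^ (S + 2) * (1 + S)) ^ 2)
      ((κ + ‖x‖ + ‖x - y‖) ^ (2 * σ) * ‖x - y‖ ^ 2)
      (‖(κ + ‖x‖) ^ σ • x - (κ + ‖y‖) ^ σ • y‖ ^ 2) := by
  have hS0 : (0:ℝ) ≤ S := le_trans zero_le_one hS
  have h3S : (1:ℝ) ≤ 3 ^ (2 * S) := Real.one_le_rpow (by norm_num) (by linarith)
  have hc1 : (1:ℝ) ≤ 2 ^ (S + 2) * (1 + S) := by
    nlinarith [two_rpow_ge_one (show (0:ℝ) ≤ S + 2 by linarith)]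
  have hc1sq : (1:ℝ) ≤ (2 ^ (S + 2) * (1 + S)) ^ 2 := by nlinarith
  -- step 1: the max version
  have hmax : Cmp ((2 ^ (S + 2) * (1 + S)) ^ 2)
      ((κ + max ‖x‖ ‖y‖) ^ (2 * σ) * ‖x - y‖ ^ 2)
      (‖(κ + ‖x‖) ^ σ • x - (κ + ‖y‖) ^ σ • y‖ ^ 2) := by
    rcases le_total ‖y‖ ‖x‖ with h | h
    · rw [max_eq_left h]
      exact vector_hammer_aux hκ hσ hσS hS x y h
    · rw [max_eq_right h]
      have h2 := vector_hammer_aux hκ hσ hσS hS y x h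
      rw [norm_sub_rev y x, norm_sub_rev ((κ + ‖y‖) ^ σ • y) ((κ + ‖x‖) ^ σ • x)] at h2
      exact h2
  -- step 2: base conversion
  rcases (show (0:ℝ) ≤ κ + max ‖x‖ ‖y‖ by positivity).eq_or_lt with heq | hpos
  · -- x = y = 0
    have hx0 : x = 0 := norm_eq_zero.mp (by
      have := le_max_left ‖x‖ ‖y‖
      have := norm_nonneg x; linarith)
    have hy0 : y = 0 := norm_eq_zero.mp (by
      have := le_max_right ‖x‖ ‖y‖
      have := norm_nonneg y; linarith)
    subst hx0; subst hy0
    simp [Cmp]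
  · have hMx : ‖x‖ ≤ max ‖x‖ ‖y‖ := le_max_left _ _
    have hMy : ‖y‖ ≤ max ‖x‖ ‖y‖ := le_max_right _ _
    have hr2 : ‖x - y‖ ≤ ‖x‖ + ‖y‖ := norm_sub_le x y
    have hyx : ‖y‖ ≤ ‖x‖ + ‖x - y‖ := by
      calc ‖y‖ = ‖x - (x - y)‖ := by congr 1; abel
        _ ≤ ‖x‖ + ‖x - y‖ := norm_sub_le _ _
    have hB1 : κ + max ‖x‖ ‖y‖ ≤ κ + ‖x‖ + ‖x - y‖ := by
      rcases max_cases ‖x‖ ‖y‖ with ⟨hm, _⟩ | ⟨hm, _⟩ <;> rw [hm] <;>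
        [linarith [norm_nonneg (x - y)]; linarith]
    have hB2 : κ + ‖x‖ + ‖x - y‖ ≤ 3 * (κ + max ‖x‖ ‖y‖) := by
      have := norm_nonneg y
      linarith [hr2, hMx, hMy]
    have hBpos : 0 < κ + ‖x‖ + ‖x - y‖ := lt_of_lt_of_le hpos hB1
    have habs : |2 * σ| ≤ 2 * S := abs_two_mul_le hσS
    have h3 : (1:ℝ) ≤ 3 := by norm_num
    have u1 : (κ + max ‖x‖ ‖y‖) ^ (2 * σ) ≤ 3 ^ (2 * S) * (κ + ‖x‖ + ‖x - y‖) ^ (2 * σ) :=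
      rpow_ratio_le hBpos hpos (by linarith) (by linarith) h3 habs
    have u2 : (κ + ‖x‖ + ‖x - y‖) ^ (2 * σ) ≤ 3 ^ (2 * S) * (κ + max ‖x‖ ‖y‖) ^ (2 * σ) :=
      rpow_ratio_le hpos hBpos (by linarith) (by linarith) h3 habs
    have hr0 : (0:ℝ) ≤ ‖x - y‖ ^ 2 := by positivity
    have hconv : Cmp (3 ^ (2 * S))
        ((κ + ‖x‖ + ‖x - y‖) ^ (2 * σ) * ‖x - y‖ ^ 2)
        ((κ + max ‖x‖ ‖y‖) ^ (2 * σ) * ‖x - y‖ ^ 2) := by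
      constructor
      · rw [inv_mul_le_iff₀ (lt_of_lt_of_le one_pos h3S)]
        calc (κ + ‖x‖ + ‖x - y‖) ^ (2 * σ) * ‖x - y‖ ^ 2
            ≤ (3 ^ (2 * S) * (κ + max ‖x‖ ‖y‖) ^ (2 * σ)) * ‖x - y‖ ^ 2 :=
              mul_le_mul_of_nonneg_right u2 hr0
          _ = 3 ^ (2 * S) * ((κ + max ‖x‖ ‖y‖) ^ (2 * σ) * ‖x - y‖ ^ 2) := by ring
      · calc (κ + max ‖x‖ ‖y‖) ^ (2 * σ) * ‖x - y‖ ^ 2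
            ≤ (3 ^ (2 * S) * (κ + ‖x‖ + ‖x - y‖) ^ (2 * σ)) * ‖x - y‖ ^ 2 :=
              mul_le_mul_of_nonneg_right u1 hr0
          _ = 3 ^ (2 * S) * ((κ + ‖x‖ + ‖x - y‖) ^ (2 * σ) * ‖x - y‖ ^ 2) := by ring
    exact hconv.trans h3S hc1sq hmax

-- ### Section 4: the odd extension of φ' and its inverse

noncomputable def fodd (δ p : ℝ) : ℝ → ℝ := fun s => (δ + |s|) ^ (p - 2) * s

lemma fodd_nonneg_eq (δ p : ℝ) {s : ℝ} (hs : 0 ≤ s) :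
    fodd δ p s = (δ + s) ^ (p - 2) * s := by
  rw [fodd, abs_of_nonneg hs]

lemma fodd_neg (δ p s : ℝ) : fodd δ p (-s) = -fodd δ p s := by
  simp [fodd, abs_neg]

lemma fodd_zero (δ p : ℝ) : fodd δ p 0 = 0 := by simp [fodd]

lemma fodd_continuous {δ p : ℝ} (hδ : 0 ≤ δ) (hp : 1 < p) : Continuous (fodd δ p) := by
  rcases hδ.eq_or_lt with rfl | hδ0
  · -- δ = 0
    rw [continuous_iff_continuousAt]
    intro s
    rcases eq_or_ne s 0 with rfl | hs
    · -- at 0, squeeze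
      have h0 : fodd 0 p 0 = 0 := fodd_zero 0 p
      rw [ContinuousAt, h0]
      have hbound : ∀ t : ℝ, ‖fodd 0 p t‖ ≤ |t| ^ (p - 1) := by
        intro t
        rcases eq_or_ne t 0 with rfl | ht
        · simp [fodd_zero, Real.zero_rpow (show p - 1 ≠ 0 by linarith)]
        · have habs : (0:ℝ) < |t| := abs_pos.mpr ht
          rw [fodd]
          rw [Real.norm_eq_abs, abs_mul, abs_of_nonneg (Real.rpow_nonneg (by positivity) _)]
          rw [zero_add, ← Real.rpow_add_one (ne_of_gt habs),
            show p - 2 + 1 = p - 1 by ring]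
      have htend : Filter.Tendsto (fun t : ℝ => |t| ^ (p - 1)) (nhds 0) (nhds 0) := by
        have hcont : ContinuousAt (fun u : ℝ => u ^ (p - 1)) |(0:ℝ)| := by
          rw [abs_zero]
          exact Real.continuousAt_rpow_const 0 (p - 1) (Or.inr (by linarith))
        have h2 := hcont.comp (continuous_abs.continuousAt (x := (0:ℝ)))
        rw [ContinuousAt] at h2
        simpa [Function.comp_def, Real.zero_rpow (show p - 1 ≠ 0 by linarith)] using h2
      exact squeeze_zero_norm hbound htend
    · -- at s ≠ 0
      apply ContinuousAt.mul _ continuousAt_id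
      have habs : (0:ℝ) < |s| := abs_pos.mpr hs
      have h2 : ContinuousAt (fun x : ℝ => 0 + |x|) s :=
        Continuous.continuousAt (continuous_const.add continuous_abs)
      exact ContinuousAt.comp (g := fun u : ℝ => u ^ (p - 2)) (f := fun x : ℝ => 0 + |x|)
        (Real.continuousAt_rpow_const (0 + |s|) (p - 2) (Or.inl (by positivity))) h2
  · -- δ > 0
    apply Continuous.mul _ continuous_id
    apply Continuous.rpow_const (continuous_const.add continuous_abs)
    intro s
    exact Or.inl (by show δ + |s| ≠ 0; positivity)

lemma fodd_pos {δ p : ℝ} (hδ : 0 ≤ δ) (hp : 1 < p) {s : ℝ} (hs : 0 < s) :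
    0 < fodd δ p s := by
  rw [fodd]
  have : 0 < δ + |s| := by rw [abs_of_pos hs]; linarith
  positivity

lemma fodd_strictMono {δ p : ℝ} (hδ : 0 ≤ δ) (hp : 1 < p) : StrictMono (fodd δ p) := by
  have monoNN : ∀ s t : ℝ, 0 ≤ s → s < t → fodd δ p s < fodd δ p t := by
    intro s t hs hst
    have ht0 : 0 < t := lt_of_le_of_lt hs hst
    rcases (show 0 ≤ δ + s by linarith).eq_or_lt with heq | hpos
    · -- δ = 0, s = 0
      have hs0 : s = 0 := by linarith
      subst hs0
      rw [fodd_zero]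
      exact fodd_pos hδ hp ht0
    · -- use derivative on [s, t]
      have hSM : StrictMonoOn (fodd δ p) (Icc s t) := by
        apply strictMonoOn_of_deriv_pos (convex_Icc s t)
          ((fodd_continuous hδ hp).continuousOn)
        intro x hx
        rw [interior_Icc] at hx
        have hx0 : 0 < x := lt_of_le_of_lt hs hx.1
        have hδx : 0 < δ + x := by linarith
        have heq : fodd δ p =ᶠ[nhds x] (fun u => (δ + u) ^ (p - 2) * u) := by
          filter_upwards [eventually_gt_nhds hx0] with u hu
          exact fodd_nonneg_eq δ p hu.le
        rw [heq.deriv_eq, (hasDerivAt_shift_rpow_mul (κ := δ) (σ := p - 2) hδx).deriv]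
        have h1 : 0 < (δ + x) ^ (p - 2 - 1) := Real.rpow_pos_of_pos hδx _
        have h2 : 0 < δ + (1 + (p - 2)) * x := by nlinarith
        positivity
      exact hSM (left_mem_Icc.mpr hst.le) (right_mem_Icc.mpr hst.le) hst
  intro s t hst
  rcases le_or_gt 0 s with hs | hs
  · exact monoNN s t hs hst
  · rcases le_or_gt t 0 with ht | ht
    · have := monoNN (-t) (-s) (by linarith) (by linarith)
      rw [fodd_neg, fodd_neg] at this
      linarith
    · have h1 : fodd δ p s < 0 := by
        have := fodd_pos hδ hp (show 0 < -s by linarith)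
        rw [fodd_neg] at this
        linarith
      exact lt_trans h1 (fodd_pos hδ hp ht)

lemma fodd_tendsto_atTop {δ p : ℝ} (hδ : 0 ≤ δ) (hp : 1 < p) :
    Filter.Tendsto (fodd δ p) Filter.atTop Filter.atTop := by
  rcases le_or_gt 2 p with hp2 | hp2
  · apply Filter.tendsto_atTop_mono' Filter.atTop _ Filter.tendsto_id
    filter_upwards [Filter.eventually_ge_atTop (max δ 1)] with s hs
    have hs1 : (1:ℝ) ≤ s := le_trans (le_max_right δ 1) hs
    have hsδ : δ ≤ s := le_trans (le_max_left δ 1) hs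
    rw [fodd_nonneg_eq δ p (by linarith)]
    have h1 : (1:ℝ) ≤ (δ + s) ^ (p - 2) := Real.one_le_rpow (by linarith) (by linarith)
    calc (s:ℝ) = 1 * s := (one_mul s).symm
      _ ≤ (δ + s) ^ (p - 2) * s := mul_le_mul_of_nonneg_right h1 (by linarith)
  · have hminor : Filter.Tendsto (fun s : ℝ => 2 ^ (p - 2) * s ^ (p - 1))
        Filter.atTop Filter.atTop :=
      (tendsto_rpow_atTop (by linarith : 0 < p - 1)).const_mul_atTop
        (Real.rpow_pos_of_pos two_pos _)
    apply Filter.tendsto_atTop_mono' Filter.atTop _ hminor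
    filter_upwards [Filter.eventually_ge_atTop (max δ 1)] with s hs
    have hs1 : (1:ℝ) ≤ s := le_trans (le_max_right δ 1) hs
    have hs0 : (0:ℝ) < s := by linarith
    have hsδ : δ ≤ s := le_trans (le_max_left δ 1) hs
    rw [fodd_nonneg_eq δ p (by linarith)]
    have h1 : (2 * s) ^ (p - 2) ≤ (δ + s) ^ (p - 2) :=
      Real.rpow_le_rpow_of_nonpos (by linarith) (by linarith) (by linarith)
    have h2 : (2 * s) ^ (p - 2) = 2 ^ (p - 2) * s ^ (p - 2) :=
      Real.mul_rpow two_pos.le hs0.le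
    have h3 : 2 ^ (p - 2) * s ^ (p - 1) = (2 * s) ^ (p - 2) * s := by
      rw [h2, mul_assoc, ← Real.rpow_add_one hs0.ne']
      ring_nf
    rw [h3]
    exact mul_le_mul_of_nonneg_right h1 hs0.le

lemma fodd_surjective {δ p : ℝ} (hδ : 0 ≤ δ) (hp : 1 < p) :
    Function.Surjective (fodd δ p) := by
  apply Continuous.surjective (fodd_continuous hδ hp) (fodd_tendsto_atTop hδ hp)
  have h1 : Filter.Tendsto (fun s : ℝ => fodd δ p (-s)) Filter.atBot Filter.atTop :=
    (fodd_tendsto_atTop hδ hp).comp Filter.tendsto_neg_atBot_atTop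
  have h2 : Filter.Tendsto (fun s : ℝ => -fodd δ p (-s)) Filter.atBot Filter.atBot :=
    Filter.tendsto_neg_atTop_atBot.comp h1
  apply h2.congr
  intro s
  rw [fodd_neg]
  ring

/-- The inverse of `fodd δ p`. -/
noncomputable def ginv (δ p : ℝ) : ℝ → ℝ := Function.invFun (fodd δ p)

lemma fodd_ginv {δ p : ℝ} (hδ : 0 ≤ δ) (hp : 1 < p) (t : ℝ) :
    fodd δ p (ginv δ p t) = t :=
  Function.invFun_eq (fodd_surjective hδ hp t)

lemma ginv_fodd {δ p : ℝ} (hδ : 0 ≤ δ) (hp : 1 < p) (s : ℝ) :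
    ginv δ p (fodd δ p s) = s :=
  Function.leftInverse_invFun (fodd_strictMono hδ hp).injective s

lemma ginv_zero {δ p : ℝ} (hδ : 0 ≤ δ) (hp : 1 < p) : ginv δ p 0 = 0 := by
  have := ginv_fodd hδ hp 0
  rwa [fodd_zero] at this

lemma ginv_strictMono {δ p : ℝ} (hδ : 0 ≤ δ) (hp : 1 < p) : StrictMono (ginv δ p) := by
  intro s t hst
  rw [← (fodd_strictMono hδ hp).lt_iff_lt, fodd_ginv hδ hp, fodd_ginv hδ hp]
  exact hst

lemma ginv_nonneg {δ p : ℝ} (hδ : 0 ≤ δ) (hp : 1 < p) {t : ℝ} (ht : 0 ≤ t) :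
    0 ≤ ginv δ p t := by
  rcases ht.eq_or_lt with rfl | ht0
  · rw [ginv_zero hδ hp]
  · have := ginv_strictMono hδ hp ht0
    rw [ginv_zero hδ hp] at this
    linarith

lemma ginv_pos {δ p : ℝ} (hδ : 0 ≤ δ) (hp : 1 < p) {t : ℝ} (ht : 0 < t) :
    0 < ginv δ p t := by
  have := ginv_strictMono hδ hp ht
  rw [ginv_zero hδ hp] at this
  linarith

lemma ginv_continuous {δ p : ℝ} (hδ : 0 ≤ δ) (hp : 1 < p) : Continuous (ginv δ p) := by
  have heq : ginv δ p = ⇑(StrictMono.orderIsoOfSurjective (fodd δ p) (fodd_strictMono hδ hp)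
      (fodd_surjective hδ hp)).symm := by
    funext t
    apply (fodd_strictMono hδ hp).injective
    rw [fodd_ginv hδ hp]
    exact (StrictMono.orderIsoOfSurjective_self_symm_apply (fodd δ p) (fodd_strictMono hδ hp)
      (fodd_surjective hδ hp) t).symm
  rw [heq]
  exact OrderIso.continuous _

-- ### Section 5: the Fenchel conjugate of phi and its derivative

lemma integrand_contOn {δ p : ℝ} (hδ : 0 ≤ δ) (hp : 1 < p) :
    ContinuousOn (fun s : ℝ => (δ + s) ^ (p - 2) * s) (Ici 0) := by
  apply ((fodd_continuous hδ hp).continuousOn).congr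
  intro s hs
  exact (fodd_nonneg_eq δ p hs).symm

lemma integrand_intervalIntegrable {δ p : ℝ} (hδ : 0 ≤ δ) (hp : 1 < p) {u v : ℝ}
    (hu : 0 ≤ u) (hv : 0 ≤ v) :
    IntervalIntegrable (fun s : ℝ => (δ + s) ^ (p - 2) * s) MeasureTheory.volume u v := by
  apply ContinuousOn.intervalIntegrable
  apply (integrand_contOn hδ hp).mono
  intro x hx
  exact le_trans (le_min hu hv) hx.1

lemma phi_hasDerivAt {δ p : ℝ} (hδ : 0 ≤ δ) (hp : 1 < p) {u : ℝ} (hu : 0 < u) :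
    HasDerivAt (phi δ p) ((δ + u) ^ (p - 2) * u) u := by
  apply intervalIntegral.integral_hasDerivAt_right
    (integrand_intervalIntegrable hδ hp le_rfl hu.le)
  · apply ContinuousOn.stronglyMeasurableAtFilter (s := Ioi 0) isOpen_Ioi
    · exact (integrand_contOn hδ hp).mono Ioi_subset_Ici_self
    · exact hu
  · exact ((integrand_contOn hδ hp).continuousAt (Ici_mem_nhds hu))

lemma phi_sub_eq {δ p : ℝ} (hδ : 0 ≤ δ) (hp : 1 < p) {u v : ℝ} (hu : 0 ≤ u) (hv : 0 ≤ v) :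
    phi δ p v - phi δ p u = ∫ s in u..v, (δ + s) ^ (p - 2) * s := by
  rw [phi, phi]
  rw [← intervalIntegral.integral_interval_sub_left
    (integrand_intervalIntegrable hδ hp le_rfl hv)
    (integrand_intervalIntegrable hδ hp le_rfl hu)]

lemma young_ineq {δ p : ℝ} (hδ : 0 ≤ δ) (hp : 1 < p) {t s : ℝ} (ht : 0 ≤ t) (hs : 0 ≤ s) :
    t * s - phi δ p s ≤ t * ginv δ p t - phi δ p (ginv δ p t) := by
  set u := ginv δ p t with hu
  have hu0 : 0 ≤ u := ginv_nonneg hδ hp ht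
  have hfu : fodd δ p u = t := fodd_ginv hδ hp t
  have key : t * (s - u) ≤ phi δ p s - phi δ p u := by
    rcases le_total u s with hus | hsu
    · rw [phi_sub_eq hδ hp hu0 hs]
      have hmono : ∀ x ∈ Icc u s, t ≤ (δ + x) ^ (p - 2) * x := by
        intro x hx
        rw [← hfu, ← fodd_nonneg_eq δ p (le_trans hu0 hx.1)]
        exact (fodd_strictMono hδ hp).monotone hx.1
      calc t * (s - u) = ∫ _ in u..s, t := by
            rw [intervalIntegral.integral_const, smul_eq_mul]; ring
        _ ≤ ∫ x in u..s, (δ + x) ^ (p - 2) * x := by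
            apply intervalIntegral.integral_mono_on hus intervalIntegrable_const
              (integrand_intervalIntegrable hδ hp hu0 hs) hmono
    · rw [phi_sub_eq hδ hp hu0 hs]
      rw [intervalIntegral.integral_symm s u]
      have hmono : ∀ x ∈ Icc s u, (δ + x) ^ (p - 2) * x ≤ t := by
        intro x hx
        rw [← hfu, ← fodd_nonneg_eq δ p (le_trans hs hx.1)]
        exact (fodd_strictMono hδ hp).monotone hx.2
      have h2 : (∫ x in s..u, (δ + x) ^ (p - 2) * x) ≤ ∫ _ in s..u, t := by
        apply intervalIntegral.integral_mono_on hsu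
          (integrand_intervalIntegrable hδ hp hs hu0) intervalIntegrable_const hmono
      rw [intervalIntegral.integral_const, smul_eq_mul] at h2
      nlinarith [h2]
  nlinarith [key]

lemma fconj_phi_eq {δ p : ℝ} (hδ : 0 ≤ δ) (hp : 1 < p) {t : ℝ} (ht : 0 ≤ t) :
    fconj (phi δ p) t = t * ginv δ p t - phi δ p (ginv δ p t) := by
  apply le_antisymm
  · apply ciSup_le
    intro s
    exact young_ineq hδ hp ht s.2
  · have hmem : (⟨ginv δ p t, ginv_nonneg hδ hp ht⟩ : NNReal) ∈ (Set.univ : Set NNReal) :=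
      Set.mem_univ _
    have hbdd : BddAbove (Set.range fun s : NNReal => t * (s : ℝ) - phi δ p (s : ℝ)) := by
      refine ⟨t * ginv δ p t - phi δ p (ginv δ p t), ?_⟩
      rintro z ⟨s, rfl⟩
      exact young_ineq hδ hp ht s.2
    have := le_ciSup hbdd (⟨ginv δ p t, ginv_nonneg hδ hp ht⟩ : NNReal)
    exact this

lemma deriv_fconj_phi {δ p : ℝ} (hδ : 0 ≤ δ) (hp : 1 < p) {t : ℝ} (ht : 0 < t) :
    deriv (fconj (phi δ p)) t = ginv δ p t := by
  set u := ginv δ p t with hudef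
  have hu : 0 < u := ginv_pos hδ hp ht
  have hδu : 0 < δ + u := by linarith
  have hfu : fodd δ p u = t := fodd_ginv hδ hp t
  -- derivative of fodd at u
  have hfd : HasDerivAt (fodd δ p) ((δ + u) ^ (p - 2 - 1) * (δ + (1 + (p - 2)) * u)) u := by
    apply HasDerivAt.congr_of_eventuallyEq (hasDerivAt_shift_rpow_mul hδu)
    filter_upwards [eventually_gt_nhds hu] with v hv
    exact fodd_nonneg_eq δ p hv.le
  have hfd0 : (δ + u) ^ (p - 2 - 1) * (δ + (1 + (p - 2)) * u) ≠ 0 := by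
    have h1 : 0 < (δ + u) ^ (p - 2 - 1) := Real.rpow_pos_of_pos hδu _
    have h2 : 0 < δ + (1 + (p - 2)) * u := by nlinarith
    positivity
  -- derivative of ginv at t
  have hg' : HasDerivAt (ginv δ p) ((δ + u) ^ (p - 2 - 1) * (δ + (1 + (p - 2)) * u))⁻¹ t := by
    apply HasDerivAt.of_local_left_inverse ((ginv_continuous hδ hp).continuousAt)
      _ hfd0 (Filter.Eventually.of_forall (fodd_ginv hδ hp))
    rw [← hudef]
    exact hfd
  -- derivative of phi at u
  have hφ : HasDerivAt (phi δ p) t u := by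
    have := phi_hasDerivAt hδ hp hu
    rwa [← fodd_nonneg_eq δ p hu.le, hfu] at this
  -- derivative of the Legendre function
  set D := ((δ + u) ^ (p - 2 - 1) * (δ + (1 + (p - 2)) * u))⁻¹ with hD
  have hL : HasDerivAt (fun y => y * ginv δ p y - phi δ p (ginv δ p y)) u t := by
    have h1 : HasDerivAt (fun y : ℝ => y * ginv δ p y) (1 * ginv δ p t + t * D) t :=
      (hasDerivAt_id t).mul hg'
    have h2 : HasDerivAt (fun y : ℝ => phi δ p (ginv δ p y)) (t * D) t := by
      exact hφ.comp t hg'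
    have h3 := h1.sub h2
    have : 1 * ginv δ p t + t * D - t * D = u := by rw [← hudef]; ring
    rwa [this] at h3
  -- conclude
  have heq : fconj (phi δ p) =ᶠ[nhds t] (fun y => y * ginv δ p y - phi δ p (ginv δ p y)) := by
    filter_upwards [eventually_gt_nhds ht] with y hy
    exact fconj_phi_eq hδ hp hy.le
  rw [Filter.EventuallyEq.deriv_eq heq]
  exact hL.deriv

-- ### Section 6: comparison of ginv with its explicit model, and the integral estimate

lemma exponent_repr {p : ℝ} (hp : 1 < p) : p / (p - 1) - 2 = 1 / (p - 1) - 1 := by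
  have : p - 1 ≠ 0 := by linarith
  field_simp
  ring

lemma exponent_bounds {pm pp p : ℝ} (hpm : 1 < pm) (hp1 : pm ≤ p) (hp2 : p ≤ pp) :
    -1 < p / (p - 1) - 2 ∧ |p / (p - 1) - 2| ≤ 1 + 1 / (pm - 1) := by
  have hp : 1 < p := lt_of_lt_of_le hpm hp1
  have hp0 : 0 < p - 1 := by linarith
  have hpm0 : 0 < pm - 1 := by linarith
  rw [exponent_repr hp]
  have h1 : 0 < 1 / (p - 1) := by positivity
  have h2 : 1 / (p - 1) ≤ 1 / (pm - 1) := by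
    apply one_div_le_one_div_of_le hpm0 (by linarith)
  constructor
  · linarith
  · rw [abs_le]
    constructor <;> [linarith; linarith]

lemma two_rpow_pp_ge_two {pp : ℝ} (hpp : 1 ≤ pp) : (2:ℝ) ≤ 2 ^ pp := by
  calc (2:ℝ) = 2 ^ (1:ℝ) := (Real.rpow_one 2).symm
    _ ≤ 2 ^ pp := Real.rpow_le_rpow_of_exponent_le one_le_two hpp

lemma m_fodd_cmp {δ pm pp p : ℝ} (hδ : 0 ≤ δ) (hpm : 1 < pm) (hp1 : pm ≤ p) (hp2 : p ≤ pp)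
    {u : ℝ} (hu : 0 ≤ u) :
    Cmp ((2 ^ pp) ^ (1 + 1 / (pm - 1))) u
      ((δ ^ (p - 1) + (δ + u) ^ (p - 2) * u) ^ (p / (p - 1) - 2) * ((δ + u) ^ (p - 2) * u)) := by
  have hp : 1 < p := lt_of_lt_of_le hpm hp1
  have hpp1 : (1:ℝ) ≤ pp := by linarith
  have hK1 : (1:ℝ) ≤ 2 ^ pp := two_rpow_ge_one (by linarith)
  have hK2 : (2:ℝ) ≤ 2 ^ pp := two_rpow_pp_ge_two hpp1
  have hE1 : (1:ℝ) ≤ 1 + 1 / (pm - 1) := by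
    have : 0 < 1 / (pm - 1) := one_div_pos.mpr (by linarith)
    linarith
  have hcB1 : (1:ℝ) ≤ (2 ^ pp) ^ (1 + 1 / (pm - 1)) := Real.one_le_rpow hK1 (by linarith)
  have hcB0 : (0:ℝ) < (2 ^ pp) ^ (1 + 1 / (pm - 1)) := lt_of_lt_of_le one_pos hcB1
  rcases (show 0 ≤ δ + u by linarith).eq_or_lt with heq | hδu
  · -- δ = u = 0
    have hδ0 : δ = 0 := by linarith
    have hu0 : u = 0 := by linarith
    subst hδ0; subst hu0
    simp [Cmp]
  set e := p / (p - 1) - 2 with hedef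
  obtain ⟨hee, heE⟩ := exponent_bounds hpm hp1 hp2
  set t := (δ + u) ^ (p - 2) * u with htdef
  have ht0 : 0 ≤ t := mul_nonneg (Real.rpow_nonneg hδu.le _) hu
  set A := δ ^ (p - 1) + t with hAdef
  set B := (δ + u) ^ (p - 1) with hBdef
  have hB0 : 0 < B := Real.rpow_pos_of_pos hδu _
  have hBsplit : B = (δ + u) ^ (p - 2) * (δ + u) := by
    rw [hBdef, ← Real.rpow_add_one hδu.ne', show p - 2 + 1 = p - 1 by ring]
  have hA1 : A ≤ 2 ^ pp * B := by
    have h1 : δ ^ (p - 1) ≤ B := Real.rpow_le_rpow hδ (by linarith) (by linarith)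
    have h2 : t ≤ B := by
      rw [hBsplit, htdef]
      exact mul_le_mul_of_nonneg_left (by linarith) (Real.rpow_nonneg hδu.le _)
    nlinarith
  have hA2 : B ≤ 2 ^ pp * A := by
    rcases le_total u δ with huδ | hδu'
    · -- u ≤ δ, so δ > 0
      have hδ0 : 0 < δ := by
        rcases hδ.eq_or_lt with rfl | h
        · exfalso; nlinarith
        · exact h
      have h1 : B ≤ (2 * δ) ^ (p - 1) :=
        Real.rpow_le_rpow (by linarith) (by linarith) (by linarith)
      have h2 : (2 * δ) ^ (p - 1) = 2 ^ (p - 1) * δ ^ (p - 1) :=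
        Real.mul_rpow two_pos.le hδ0.le
      have h3 : (2:ℝ) ^ (p - 1) ≤ 2 ^ pp :=
        Real.rpow_le_rpow_of_exponent_le one_le_two (by linarith)
      have h4 : 0 < δ ^ (p - 1) := Real.rpow_pos_of_pos hδ0 _
      have h5 : δ ^ (p - 1) ≤ A := by rw [hAdef]; linarith
      calc B ≤ 2 ^ (p - 1) * δ ^ (p - 1) := by rw [← h2]; exact h1
        _ ≤ 2 ^ pp * δ ^ (p - 1) := mul_le_mul_of_nonneg_right h3 h4.le
        _ ≤ 2 ^ pp * A := mul_le_mul_of_nonneg_left h5 (by positivity)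
    · -- δ ≤ u, so u > 0
      have h1 : B ≤ 2 * t := by
        rw [hBsplit, htdef]
        have := mul_le_mul_of_nonneg_left (show δ + u ≤ 2 * u by linarith)
          (Real.rpow_nonneg hδu.le (p - 2))
        linarith
      have h2 : t ≤ A := by
        rw [hAdef]
        have : 0 ≤ δ ^ (p - 1) := Real.rpow_nonneg hδ _
        linarith
      nlinarith
  have hA0 : 0 < A := by nlinarith [Real.rpow_pos_of_pos two_pos pp]
  have r1 : A ^ e ≤ (2 ^ pp) ^ (1 + 1 / (pm - 1)) * B ^ e :=
    rpow_ratio_le hB0 hA0 hA1 hA2 hK1 heE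
  have r2 : B ^ e ≤ (2 ^ pp) ^ (1 + 1 / (pm - 1)) * A ^ e :=
    rpow_ratio_le hA0 hB0 hA2 hA1 hK1 heE
  have hBe : B ^ e * t = u := by
    rw [hBdef, ← Real.rpow_mul hδu.le]
    have hpe : (p - 1) * e = 2 - p := by
      have hne : p - 1 ≠ 0 := by linarith
      rw [hedef]
      field_simp
      ring
    rw [hpe, htdef, ← mul_assoc, ← Real.rpow_add hδu, show 2 - p + (p - 2) = 0 by ring,
      Real.rpow_zero, one_mul]
  constructor
  · rw [inv_mul_le_iff₀ hcB0]
    calc u = B ^ e * t := hBe.symm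
      _ ≤ ((2 ^ pp) ^ (1 + 1 / (pm - 1)) * A ^ e) * t := mul_le_mul_of_nonneg_right r2 ht0
      _ = (2 ^ pp) ^ (1 + 1 / (pm - 1)) * (A ^ e * t) := by ring
  · calc A ^ e * t ≤ ((2 ^ pp) ^ (1 + 1 / (pm - 1)) * B ^ e) * t :=
        mul_le_mul_of_nonneg_right r1 ht0
      _ = (2 ^ pp) ^ (1 + 1 / (pm - 1)) * (B ^ e * t) := by ring
      _ = (2 ^ pp) ^ (1 + 1 / (pm - 1)) * u := by rw [hBe]

lemma ginv_cmp {δ pm pp p : ℝ} (hδ : 0 ≤ δ) (hpm : 1 < pm) (hp1 : pm ≤ p) (hp2 : p ≤ pp)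
    {t : ℝ} (ht : 0 ≤ t) :
    Cmp ((2 ^ pp) ^ (1 + 1 / (pm - 1))) ((δ ^ (p - 1) + t) ^ (p / (p - 1) - 2) * t)
      (ginv δ p t) := by
  have hp : 1 < p := lt_of_lt_of_le hpm hp1
  have hcB1 : (1:ℝ) ≤ (2 ^ pp) ^ (1 + 1 / (pm - 1)) := by
    apply Real.one_le_rpow (two_rpow_ge_one (by linarith))
    have : 0 < 1 / (pm - 1) := one_div_pos.mpr (by linarith)
    linarith
  have h := m_fodd_cmp hδ hpm hp1 hp2 (ginv_nonneg hδ hp ht)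
  have key : (δ + ginv δ p t) ^ (p - 2) * ginv δ p t = t := by
    rw [← fodd_nonneg_eq δ p (ginv_nonneg hδ hp ht)]
    exact fodd_ginv hδ hp t
  rw [key] at h
  exact h.symm hcB1

-- ### Section 6b: integral estimates

lemma integrable_shift_rpow_mul {K e : ℝ} (hK : 0 ≤ K) (he : -1 < e) {r : ℝ} (hr : 0 ≤ r) :
    IntervalIntegrable (fun s : ℝ => (K + s) ^ e * s) MeasureTheory.volume 0 r := by
  apply ContinuousOn.intervalIntegrable
  rw [uIcc_of_le hr]
  rcases hK.eq_or_lt with rfl | hK0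
  · -- K = 0
    have hcont : ContinuousOn (fun s : ℝ => s ^ (e + 1)) (Icc 0 r) := fun s _ =>
      (Real.continuousAt_rpow_const s (e + 1) (Or.inr (by linarith))).continuousWithinAt
    apply hcont.congr
    intro s hs
    show (0 + s) ^ e * s = s ^ (e + 1)
    rcases hs.1.eq_or_lt with rfl | hs0
    · simp [Real.zero_rpow (show e + 1 ≠ 0 by linarith)]
    · rw [zero_add, ← Real.rpow_add_one hs0.ne']
  · apply ContinuousOn.mul _ continuousOn_id
    apply ContinuousOn.rpow_const (by fun_prop)
    intro s hs
    exact Or.inl (by nlinarith [hs.1])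

lemma integral_id' {a b : ℝ} : (∫ s in a..b, s) = (b ^ 2 - a ^ 2) / 2 := integral_id

lemma const_mul_id_intInt (C a b : ℝ) :
    IntervalIntegrable (fun s : ℝ => C * s) MeasureTheory.volume a b :=
  Continuous.intervalIntegrable (by fun_prop) a b

set_option maxHeartbeats 1000000 in
lemma int_shift_rpow_cmp {K e E r : ℝ} (hK : 0 ≤ K) (hee : -1 < e) (heE : e ≤ E)
    (hE : 1 ≤ E) (hr : 0 < r) :
    Cmp (2 ^ (E + 3)) ((K + r) ^ e * r ^ 2) (∫ s in (0:ℝ)..r, (K + s) ^ e * s) := by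
  have hKr : 0 < K + r := by linarith
  have hc1 : (1:ℝ) ≤ 2 ^ (E + 3) := two_rpow_ge_one (by linarith)
  have hc0 : (0:ℝ) < 2 ^ (E + 3) := lt_of_lt_of_le one_pos hc1
  have hM0 : 0 < (K + r) ^ e := Real.rpow_pos_of_pos hKr e
  have hint := integrable_shift_rpow_mul hK hee hr.le
  have hsplit3 : (2:ℝ) ^ (E + 3) = 2 ^ E * 8 := by
    rw [Real.rpow_add two_pos]
    congr 1
    rw [show (3:ℝ) = ((3:ℕ):ℝ) from by norm_num, Real.rpow_natCast]
    norm_num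
  have h2E1 : (1:ℝ) ≤ 2 ^ E := two_rpow_ge_one (by linarith)
  rcases le_or_gt 0 e with he0 | he0
  · -- e ≥ 0
    constructor
    · -- lower bound via [r/2, r]
      rw [inv_mul_le_iff₀ hc0]
      have hsub : (∫ s in (r/2:ℝ)..r, (K + s) ^ e * s) ≤ ∫ s in (0:ℝ)..r, (K + s) ^ e * s := by
        apply intervalIntegral.integral_mono_interval (by linarith) (by linarith) le_rfl _ hint
        rw [Filter.EventuallyLE]
        apply MeasureTheory.ae_restrict_of_forall_mem measurableSet_Ioc
        intro s hs
        have : 0 < s := hs.1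
        have : (0:ℝ) ≤ (K + s) ^ e := Real.rpow_nonneg (by linarith) e
        simp only [Pi.zero_apply]
        nlinarith
      have hlow : ∀ s ∈ Icc (r/2) r, (K + r/2) ^ e * s ≤ (K + s) ^ e * s := by
        intro s hs
        apply mul_le_mul_of_nonneg_right _ (by linarith [hs.1])
        exact Real.rpow_le_rpow (by linarith) (by linarith [hs.1]) he0
      have h3 : (K + r/2) ^ e * ((r^2 - (r/2)^2)/2) ≤ ∫ s in (r/2:ℝ)..r, (K + s) ^ e * s := by
        have := intervalIntegral.integral_mono_on (by linarith : r/2 ≤ r)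
          (const_mul_id_intInt ((K + r/2) ^ e) (r/2) r)
          (by
            apply ContinuousOn.intervalIntegrable
            apply ContinuousOn.mul _ continuousOn_id
            apply ContinuousOn.rpow_const (by fun_prop)
            intro s hs
            rw [uIcc_of_le (by linarith : r/2 ≤ r)] at hs
            exact Or.inl (by nlinarith [hs.1]))
          hlow
        rwa [intervalIntegral.integral_const_mul, integral_id'] at this
      have h4 : ((K + r)/2) ^ e ≤ (K + r/2) ^ e :=
        Real.rpow_le_rpow (by positivity) (by linarith) he0
      have h5 : ((K + r)/2) ^ e = (K + r) ^ e * ((2:ℝ) ^ e)⁻¹ := by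
        rw [Real.div_rpow hKr.le two_pos.le, div_eq_mul_inv]
      have h6 : (2:ℝ) ^ e ≤ 2 ^ E := Real.rpow_le_rpow_of_exponent_le one_le_two heE
      have h2e : (0:ℝ) < 2 ^ e := Real.rpow_pos_of_pos two_pos e
      -- (K+r)^e r^2 ≤ 2^(E+3) ∫
      have hfrac : (K + r) ^ e * r ^ 2 ≤ 2 ^ (E+3) * ((K + r/2) ^ e * ((r^2 - (r/2)^2)/2)) := by
        have e1 : (K + r) ^ e * r ^ 2 ≤ 2 ^ E * (K + r/2) ^ e * r ^ 2 := by
          apply mul_le_mul_of_nonneg_right _ (by positivity)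
          calc (K + r) ^ e = ((K + r)/2) ^ e * 2 ^ e := by
                rw [h5, mul_assoc, inv_mul_cancel₀ h2e.ne', mul_one]
            _ ≤ (K + r/2) ^ e * 2 ^ E := by
                apply mul_le_mul h4 h6 h2e.le (Real.rpow_nonneg (by positivity) e)
            _ = 2 ^ E * (K + r/2) ^ e := by ring
        have e2 : r ^ 2 ≤ 8 * ((r^2 - (r/2)^2)/2) := by nlinarith
        calc (K + r) ^ e * r ^ 2 ≤ 2 ^ E * (K + r/2) ^ e * r ^ 2 := e1
          _ ≤ 2 ^ E * (K + r/2) ^ e * (8 * ((r^2 - (r/2)^2)/2)) := by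
              apply mul_le_mul_of_nonneg_left e2
              positivity
          _ = 2 ^ (E+3) * ((K + r/2) ^ e * ((r^2 - (r/2)^2)/2)) := by
              rw [hsplit3]; ring
      calc (K + r) ^ e * r ^ 2
          ≤ 2 ^ (E+3) * ((K + r/2) ^ e * ((r^2 - (r/2)^2)/2)) := hfrac
        _ ≤ 2 ^ (E+3) * ∫ s in (0:ℝ)..r, (K + s) ^ e * s := by
            apply mul_le_mul_of_nonneg_left _ hc0.le
            exact le_trans h3 hsub
    · -- upper bound
      have hup : ∀ s ∈ Icc (0:ℝ) r, (K + s) ^ e * s ≤ (K + r) ^ e * s := by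
        intro s hs
        apply mul_le_mul_of_nonneg_right _ hs.1
        exact Real.rpow_le_rpow (by linarith [hs.1]) (by linarith [hs.2]) he0
      have h1 := intervalIntegral.integral_mono_on hr.le hint
        (const_mul_id_intInt ((K + r) ^ e) 0 r) hup
      rw [intervalIntegral.integral_const_mul, integral_id'] at h1
      calc (∫ s in (0:ℝ)..r, (K + s) ^ e * s) ≤ (K + r) ^ e * ((r^2 - 0^2)/2) := h1
        _ ≤ 2 ^ (E+3) * ((K + r) ^ e * r ^ 2) := by
            nlinarith [mul_pos hM0 (show (0:ℝ) < r ^ 2 by positivity), hc1]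
  · -- e < 0
    constructor
    · -- lower bound
      rw [inv_mul_le_iff₀ hc0]
      have hlow : ∀ s ∈ Icc (0:ℝ) r, (K + r) ^ e * s ≤ (K + s) ^ e * s := by
        intro s hs
        rcases hs.1.eq_or_lt with rfl | hs0
        · simp
        · apply mul_le_mul_of_nonneg_right _ hs.1
          exact Real.rpow_le_rpow_of_nonpos (by linarith) (by linarith [hs.2]) he0.le
      have h1 := intervalIntegral.integral_mono_on hr.le
        (const_mul_id_intInt ((K + r) ^ e) 0 r) hint hlow
      rw [intervalIntegral.integral_const_mul, integral_id'] at h1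
      calc (K + r) ^ e * r ^ 2 ≤ 2 ^ (E+3) * ((K + r) ^ e * ((r^2 - 0^2)/2)) := by
            nlinarith [mul_pos hM0 (show (0:ℝ) < r ^ 2 by positivity), hc1]
        _ ≤ 2 ^ (E+3) * ∫ s in (0:ℝ)..r, (K + s) ^ e * s :=
            mul_le_mul_of_nonneg_left h1 hc0.le
    · -- upper bound via majorant (K+r)^e r^(-e) s^(e+1)
      have hmajcont : Continuous (fun s : ℝ => s ^ (e + 1)) := by
        rw [continuous_iff_continuousAt]
        intro x
        rcases eq_or_ne x 0 with rfl | hx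
        · exact Real.continuousAt_rpow_const 0 (e + 1) (Or.inr (by linarith))
        · exact Real.continuousAt_rpow_const x (e + 1) (Or.inl hx)
      have hup : ∀ s ∈ Icc (0:ℝ) r, (K + s) ^ e * s ≤ (K + r) ^ e * r ^ (-e) * s ^ (e + 1) := by
        intro s hs
        rcases hs.1.eq_or_lt with rfl | hs0
        · simp [Real.zero_rpow (show e + 1 ≠ 0 by linarith)]
        · have hKs : 0 < K + s := by linarith
          have key : s / r * (K + r) ≤ K + s := by
            rw [div_mul_eq_mul_div, div_le_iff₀ hr]
            nlinarith [hs.2]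
          have h1 : (K + s) ^ e ≤ (s / r * (K + r)) ^ e :=
            Real.rpow_le_rpow_of_nonpos (by positivity) key he0.le
          have h2 : (s / r * (K + r)) ^ e = s ^ e * (r ^ e)⁻¹ * (K + r) ^ e := by
            rw [Real.mul_rpow (by positivity) hKr.le, Real.div_rpow hs0.le hr.le,
              div_eq_mul_inv]
          have h3 : (r ^ e)⁻¹ = r ^ (-e) := by rw [← Real.rpow_neg hr.le]
          calc (K + s) ^ e * s ≤ (s / r * (K + r)) ^ e * s :=
                mul_le_mul_of_nonneg_right h1 hs.1
            _ = (K + r) ^ e * r ^ (-e) * (s ^ e * s) := by rw [h2, h3]; ring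
            _ = (K + r) ^ e * r ^ (-e) * s ^ (e + 1) := by
                rw [← Real.rpow_add_one hs0.ne']
      have h1 := intervalIntegral.integral_mono_on hr.le hint
        (Continuous.intervalIntegrable (continuous_const.mul hmajcont) 0 r) hup
      have h2 : (∫ s in (0:ℝ)..r, (K + r) ^ e * r ^ (-e) * s ^ (e + 1))
          = (K + r) ^ e * r ^ (-e) * (r ^ (e + 2) / (e + 2)) := by
        rw [intervalIntegral.integral_const_mul, integral_rpow (Or.inl (by linarith))]
        rw [Real.zero_rpow (show e + 1 + 1 ≠ 0 by linarith), show e + 1 + 1 = e + 2 by ring]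
        ring_nf
      have h3 : r ^ (-e) * r ^ (e + 2) = r ^ 2 := by
        rw [← Real.rpow_add hr, show -e + (e + 2) = 2 by ring, Real.rpow_two]
      calc (∫ s in (0:ℝ)..r, (K + s) ^ e * s)
          ≤ (K + r) ^ e * r ^ (-e) * (r ^ (e + 2) / (e + 2)) := by rw [← h2]; exact h1
        _ = (K + r) ^ e * r ^ 2 / (e + 2) := by rw [← h3]; ring
        _ ≤ 2 ^ (E+3) * ((K + r) ^ e * r ^ 2) := by
            rw [div_le_iff₀ (by linarith : (0:ℝ) < e + 2)]
            have h9 : (1:ℝ) ≤ 2 ^ (E+3) * (e + 2) := by nlinarith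
            nlinarith [mul_pos hM0 (by positivity : (0:ℝ) < r ^ 2), h9]

lemma cmp_integral {f ψ : ℝ → ℝ} {c r : ℝ} (hc : 0 < c) (hr : 0 ≤ r)
    (hf : IntervalIntegrable f MeasureTheory.volume 0 r)
    (hψ : IntervalIntegrable ψ MeasureTheory.volume 0 r)
    (hlow : ∀ s ∈ Icc (0:ℝ) r, c⁻¹ * ψ s ≤ f s)
    (hup : ∀ s ∈ Icc (0:ℝ) r, f s ≤ c * ψ s) :
    Cmp c (∫ s in (0:ℝ)..r, ψ s) (∫ s in (0:ℝ)..r, f s) := by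
  constructor
  · have h1 := intervalIntegral.integral_mono_on hr (hψ.const_mul c⁻¹) hf hlow
    rwa [intervalIntegral.integral_const_mul] at h1
  · have h1 := intervalIntegral.integral_mono_on hr hf (hψ.const_mul c) hup
    rwa [intervalIntegral.integral_const_mul] at h1

-- ### Section 6c: comparison for conjShift

set_option maxHeartbeats 1000000 in
lemma conjShift_cmp {δ pm pp p : ℝ} (hδ : 0 ≤ δ) (hpm : 1 < pm) (hp1 : pm ≤ p) (hp2 : p ≤ pp)
    {a r : ℝ} (ha : 0 ≤ a) (hr : 0 ≤ r) :
    Cmp (2 ^ ((1 + 1 / (pm - 1)) + 3) * (2 ^ pp) ^ (1 + 1 / (pm - 1)))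
      ((δ ^ (p - 1) + a + r) ^ (p / (p - 1) - 2) * r ^ 2)
      (conjShift δ p a r) := by
  have hp : 1 < p := lt_of_lt_of_le hpm hp1
  have hE1 : (1:ℝ) ≤ 1 + 1 / (pm - 1) := by
    have : 0 < 1 / (pm - 1) := one_div_pos.mpr (by linarith)
    linarith
  have hcB1 : (1:ℝ) ≤ (2 ^ pp) ^ (1 + 1 / (pm - 1)) :=
    Real.one_le_rpow (two_rpow_ge_one (by linarith)) (by linarith)
  have hcB0 : (0:ℝ) < (2 ^ pp) ^ (1 + 1 / (pm - 1)) := lt_of_lt_of_le one_pos hcB1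
  have hcC1 : (1:ℝ) ≤ 2 ^ ((1 + 1 / (pm - 1)) + 3) := two_rpow_ge_one (by linarith)
  obtain ⟨hee, heE⟩ := exponent_bounds hpm hp1 hp2
  have heE' : p / (p - 1) - 2 ≤ 1 + 1 / (pm - 1) := le_trans (le_abs_self _) heE
  have hκ0 : (0:ℝ) ≤ δ ^ (p - 1) := Real.rpow_nonneg hδ _
  set E := 1 + 1 / (pm - 1) with hEdef
  set e := p / (p - 1) - 2 with hedef
  set K := δ ^ (p - 1) + a with hKdef
  have hK0 : 0 ≤ K := by rw [hKdef]; linarith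
  rcases hr.eq_or_lt with rfl | hr0
  · simp [conjShift, Cmp]
  -- rewrite the integral
  have hgcongr : conjShift δ p a r
      = ∫ s in (0:ℝ)..r, ginv δ p (a + s) * (s / (a + s)) := by
    rw [conjShift]
    apply intervalIntegral.integral_congr
    intro s hs
    rw [uIcc_of_le hr] at hs
    rcases (show 0 ≤ a + s by linarith [hs.1]).eq_or_lt with heq | hpos
    · have hs0 : s = 0 := by linarith [hs.1]
      have ha0 : a = 0 := by linarith [hs.1]
      simp [hs0, ha0]
    · show deriv (fconj (phi δ p)) (a + s) * (s / (a + s)) = ginv δ p (a + s) * (s / (a + s))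
      rw [deriv_fconj_phi hδ hp hpos]
  rw [hgcongr]
  -- integrability of the two integrands
  have hint_f : IntervalIntegrable (fun s : ℝ => ginv δ p (a + s) * (s / (a + s)))
      MeasureTheory.volume 0 r := by
    apply ContinuousOn.intervalIntegrable
    rw [uIcc_of_le hr]
    rcases ha.eq_or_lt with rfl | ha0
    · apply ContinuousOn.congr
        (((ginv_continuous hδ hp).comp (continuous_const.add continuous_id)).continuousOn
          (s := Icc 0 r))
      intro s hs
      rcases hs.1.eq_or_lt with rfl | hs0
      · show ginv δ p (0 + 0) * (0 / (0 + 0)) = ginv δ p (0 + 0)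
        simp [ginv_zero hδ hp]
      · show ginv δ p (0 + s) * (s / (0 + s)) = ginv δ p (0 + s)
        rw [zero_add, div_self hs0.ne', mul_one]
    · apply ContinuousOn.mul
      · exact ((ginv_continuous hδ hp).comp (continuous_const.add continuous_id)).continuousOn
      · apply ContinuousOn.div continuousOn_id (by fun_prop)
        intro s hs
        have := hs.1
        exact ne_of_gt (by nlinarith)
  have hint_ψ : IntervalIntegrable (fun s : ℝ => (K + s) ^ e * s) MeasureTheory.volume 0 r :=
    integrable_shift_rpow_mul hK0 hee hr
  -- pointwise bounds
  have hbound_low : ∀ s ∈ Icc (0:ℝ) r,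
      ((2 ^ pp) ^ E)⁻¹ * ((K + s) ^ e * s) ≤ ginv δ p (a + s) * (s / (a + s)) := by
    intro s hs
    rcases hs.1.eq_or_lt with rfl | hs0
    · simp
    · have hpos : 0 < a + s := by linarith
      have hc := ginv_cmp hδ hpm hp1 hp2 (show (0:ℝ) ≤ a + s by linarith)
      have heqq : (δ ^ (p - 1) + (a + s)) ^ (p / (p - 1) - 2) * (a + s) * (s / (a + s))
          = (K + s) ^ e * s := by
        rw [show δ ^ (p - 1) + (a + s) = K + s from by rw [hKdef]; ring, mul_assoc,
          mul_comm (a + s), div_mul_cancel₀ s (ne_of_gt hpos), ← hedef]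
      have h1 := mul_le_mul_of_nonneg_right hc.1 (show (0:ℝ) ≤ s / (a + s) by positivity)
      calc ((2 ^ pp) ^ E)⁻¹ * ((K + s) ^ e * s)
          = ((2 ^ pp) ^ E)⁻¹ * ((δ ^ (p - 1) + (a + s)) ^ (p / (p - 1) - 2) * (a + s))
            * (s / (a + s)) := by rw [mul_assoc, heqq]
        _ ≤ ginv δ p (a + s) * (s / (a + s)) := h1
  have hbound_up : ∀ s ∈ Icc (0:ℝ) r,
      ginv δ p (a + s) * (s / (a + s)) ≤ (2 ^ pp) ^ E * ((K + s) ^ e * s) := by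
    intro s hs
    rcases hs.1.eq_or_lt with rfl | hs0
    · simp
    · have hpos : 0 < a + s := by linarith
      have hc := ginv_cmp hδ hpm hp1 hp2 (show (0:ℝ) ≤ a + s by linarith)
      have heqq : (δ ^ (p - 1) + (a + s)) ^ (p / (p - 1) - 2) * (a + s) * (s / (a + s))
          = (K + s) ^ e * s := by
        rw [show δ ^ (p - 1) + (a + s) = K + s from by rw [hKdef]; ring, mul_assoc,
          mul_comm (a + s), div_mul_cancel₀ s (ne_of_gt hpos), ← hedef]
      have h1 := mul_le_mul_of_nonneg_right hc.2 (show (0:ℝ) ≤ s / (a + s) by positivity)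
      calc ginv δ p (a + s) * (s / (a + s))
          ≤ (2 ^ pp) ^ E * ((δ ^ (p - 1) + (a + s)) ^ (p / (p - 1) - 2) * (a + s))
            * (s / (a + s)) := h1
        _ = (2 ^ pp) ^ E * ((K + s) ^ e * s) := by rw [mul_assoc, heqq]
  have hCmpInt := cmp_integral hcB0 hr hint_f hint_ψ hbound_low hbound_up
  have hIcmp := int_shift_rpow_cmp hK0 hee heE' hE1 hr0
  exact hIcmp.trans hcC1 hcB1 hCmpInt

-- ### Section 7: matrices, Frobenius norm, and the main theorem

noncomputable def embM {d : ℕ} (M : Matrix (Fin d) (Fin d) ℝ) :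
    EuclideanSpace ℝ (Fin d × Fin d) :=
  (WithLp.equiv 2 _).symm (fun ij => M ij.1 ij.2)

lemma frob_eq_norm {d : ℕ} (M : Matrix (Fin d) (Fin d) ℝ) : frob M = ‖embM M‖ := by
  rw [frob, EuclideanSpace.norm_eq]
  congr 1
  rw [Fintype.sum_prod_type]
  apply Finset.sum_congr rfl
  intro i _
  apply Finset.sum_congr rfl
  intro j _
  rw [Real.norm_eq_abs, sq_abs]
  rfl

lemma embM_sub {d : ℕ} (M N : Matrix (Fin d) (Fin d) ℝ) :
    embM (M - N) = embM M - embM N := rfl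

lemma embM_smul {d : ℕ} (c : ℝ) (M : Matrix (Fin d) (Fin d) ℝ) :
    embM (c • M) = c • embM M := rfl


end AuxST7

theorem stmt7 (d : ℕ) (hd : 1 ≤ d) (δ pm pp : ℝ) (hδ : 0 ≤ δ) (hpm : 1 < pm)
    (hpmpp : pm ≤ pp) :
    ∃ c : ℝ, 1 ≤ c ∧ ∀ p : ℝ, pm ≤ p → p ≤ pp → ∀ A B : Matrix (Fin d) (Fin d) ℝ,
      c⁻¹ * conjShift δ p (frob (msym A)) (frob (msym A - msym B)) ≤
          frob (Fstar δ p A - Fstar δ p B) ^ 2 ∧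
      frob (Fstar δ p A - Fstar δ p B) ^ 2 ≤
          c * conjShift δ p (frob (msym A)) (frob (msym A - msym B)) := by
  have hE1 : (1:ℝ) ≤ 1 + 1 / (pm - 1) := by
    have : 0 < 1 / (pm - 1) := one_div_pos.mpr (by linarith)
    linarith
  have hpp1 : (1:ℝ) ≤ pp := by linarith
  have hc11 : (1:ℝ) ≤ 2 ^ ((1 + 1 / (pm - 1)) + 3) * (2 ^ pp) ^ (1 + 1 / (pm - 1)) := by
    have h1 : (1:ℝ) ≤ 2 ^ ((1 + 1 / (pm - 1)) + 3) := two_rpow_ge_one (by linarith)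
    have h2 : (1:ℝ) ≤ (2 ^ pp) ^ (1 + 1 / (pm - 1)) :=
      Real.one_le_rpow (two_rpow_ge_one (by linarith)) (by linarith)
    nlinarith
  have hc21 : (1:ℝ) ≤ 3 ^ (2 * (1 + 1 / (pm - 1)))
      * (2 ^ ((1 + 1 / (pm - 1)) + 2) * (1 + (1 + 1 / (pm - 1)))) ^ 2 := by
    have h1 : (1:ℝ) ≤ 3 ^ (2 * (1 + 1 / (pm - 1))) :=
      Real.one_le_rpow (by norm_num) (by linarith)
    have h2 : (1:ℝ) ≤ 2 ^ ((1 + 1 / (pm - 1)) + 2) := two_rpow_ge_one (by linarith)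
    have h3 : (1:ℝ) ≤ (2 ^ ((1 + 1 / (pm - 1)) + 2) * (1 + (1 + 1 / (pm - 1)))) ^ 2 := by
      have h4 : (1:ℝ) ≤ 2 ^ ((1 + 1 / (pm - 1)) + 2) * (1 + (1 + 1 / (pm - 1))) := by nlinarith
      nlinarith
    nlinarith
  refine ⟨(2 ^ ((1 + 1 / (pm - 1)) + 3) * (2 ^ pp) ^ (1 + 1 / (pm - 1)))
      * (3 ^ (2 * (1 + 1 / (pm - 1)))
        * (2 ^ ((1 + 1 / (pm - 1)) + 2) * (1 + (1 + 1 / (pm - 1)))) ^ 2), by nlinarith, ?_⟩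
  intro p hp1 hp2 A B
  have hp : 1 < p := lt_of_lt_of_le hpm hp1
  obtain ⟨hee, heE⟩ := exponent_bounds hpm hp1 hp2
  have hκ0 : (0:ℝ) ≤ δ ^ (p - 1) := Real.rpow_nonneg hδ _
  set x : EuclideanSpace ℝ (Fin d × Fin d) := embM (msym A) with hxdef
  set y : EuclideanSpace ℝ (Fin d × Fin d) := embM (msym B) with hydef
  have hfr1 : frob (msym A) = ‖x‖ := frob_eq_norm _
  have hfr1' : frob (msym B) = ‖y‖ := frob_eq_norm _
  have hfr2 : frob (msym A - msym B) = ‖x - y‖ := by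
    rw [frob_eq_norm, embM_sub]
  have hfr3 : frob (Fstar δ p A - Fstar δ p B)
      = ‖(δ ^ (p - 1) + ‖x‖) ^ ((p / (p - 1) - 2) / 2) • x
        - (δ ^ (p - 1) + ‖y‖) ^ ((p / (p - 1) - 2) / 2) • y‖ := by
    rw [Fstar, Fstar, frob_eq_norm, embM_sub, embM_smul, embM_smul, hfr1, hfr1']
  -- the vector hammer
  have hσ : -(2⁻¹ : ℝ) < (p / (p - 1) - 2) / 2 := by linarith
  have hσS : |(p / (p - 1) - 2) / 2| ≤ 1 + 1 / (pm - 1) := by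
    have habs : |(p / (p - 1) - 2) / 2| = |p / (p - 1) - 2| / 2 := by
      rw [abs_div]
      norm_num
    rw [habs]
    linarith [abs_nonneg (p / (p - 1) - 2)]
  have hham := vector_hammer (κ := δ ^ (p - 1)) (σ := (p / (p - 1) - 2) / 2)
    (S := 1 + 1 / (pm - 1)) hκ0 hσ hσS hE1 x y
  rw [show 2 * ((p / (p - 1) - 2) / 2) = p / (p - 1) - 2 by ring] at hham
  -- the conjugate shift comparison
  have hconj := conjShift_cmp hδ hpm hp1 hp2 (norm_nonneg x) (norm_nonneg (x - y))
  -- combine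
  rw [hfr1, hfr2, hfr3]
  exact (hconj.symm hc11).trans hc11 hc21 hham
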